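/- Let {P_i}_{i=1}^N be a POVM and {Q_j}_{j=1}^M ⊆ span{P_i} another POVM, with processing coefficients c_i^{Q_j} satisfying Σᵢ c_i^{Q_j} Tr[ρP_i] = Tr[ρQ_j] for all states ρ and Σⱼ c_i^{Q_j} = 1 for all i. Define ε* = −M c̄ /(1 − M c̄) with c̄ = min{0, min_{i,j} c_i^{Q_j}}, and Q_j(ε*) = (1−ε*) Q_j + ε* I/M. Then {Q_j(ε*)} is a POVM and is a post-processing of {P_i} via the Markov matrix m(j|i) = (1−ε*) c_i^{Q_j} + ε*/M. -/

import Mathlib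

open Matrix ComplexOrder

private lemma psd_smul_real {n : ℕ} {A : Matrix (Fin n) (Fin n) ℂ} (hA : A.PosSemidef)
    {r : ℝ} (hr : 0 ≤ r) : ((r : ℂ) • A).PosSemidef := by
  rw [posSemidef_iff_dotProduct_mulVec]
  constructor
  · have h1 := hA.1
    unfold Matrix.IsHermitian at *
    rw [conjTranspose_smul, h1, Complex.star_def, Complex.conj_ofReal]
  · intro x
    rw [smul_mulVec, dotProduct_smul, smul_eq_mul]
    exact mul_nonneg (by exact_mod_cast Complex.zero_le_real.mpr hr) (hA.dotProduct_mulVec_nonneg x)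

private lemma trace_form_zero {d : ℕ} (A : Matrix (Fin d) (Fin d) ℂ)
    (h : ∀ ρ : Matrix (Fin d) (Fin d) ℂ, ρ.PosSemidef → ρ.trace = 1 → (ρ * A).trace = 0) :
    A = 0 := by
  have hq : ∀ v : Fin d → ℂ, star v ⬝ᵥ (A *ᵥ v) = 0 := by
    intro v
    by_cases hv : v = 0
    · simp [hv]
    · set t : ℝ := ∑ i, Complex.normSq (v i) with ht_def
      have ht : 0 < t := by
        have : ∃ i, v i ≠ 0 := by
          by_contra hco; push_neg at hco; exact hv (funext hco)
        obtain ⟨i, hi⟩ := this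
        exact Finset.sum_pos' (fun i _ => Complex.normSq_nonneg _)
          ⟨i, Finset.mem_univ i, Complex.normSq_pos.mpr hi⟩
      set ρ : Matrix (Fin d) (Fin d) ℂ :=
        ((t⁻¹ : ℝ) : ℂ) • Matrix.vecMulVec v (star v) with hρ_def
      have hdot : ∀ x : Fin d → ℂ,
          star x ⬝ᵥ (Matrix.vecMulVec v (star v) *ᵥ x) = (star x ⬝ᵥ v) * (star v ⬝ᵥ x) := by
        intro x
        simp only [dotProduct, Matrix.mulVec, Matrix.vecMulVec_apply, dotProduct,
          Pi.star_apply]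
        rw [Finset.sum_mul_sum]
        simp only [Finset.mul_sum]
        exact Finset.sum_congr rfl fun i _ => Finset.sum_congr rfl fun j _ => by ring
      have hPSD : ρ.PosSemidef := by
        apply psd_smul_real _ (inv_nonneg.mpr ht.le)
        rw [posSemidef_iff_dotProduct_mulVec]
        constructor
        · ext i j
          simp [Matrix.conjTranspose_apply, Matrix.vecMulVec_apply, mul_comm]
        · intro x
          rw [hdot x]
          have hs : star x ⬝ᵥ v = star (star v ⬝ᵥ x) := by
            simp [dotProduct, Finset.sum_mul, mul_comm]
          rw [hs, Complex.star_def, mul_comm, Complex.mul_conj]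
          exact Complex.zero_le_real.mpr (Complex.normSq_nonneg _)
      have htrv : (Matrix.vecMulVec v (star v)).trace = (t : ℂ) := by
        simp [Matrix.trace, Matrix.diag, Matrix.vecMulVec_apply, ht_def, Complex.mul_conj]
      have htr : ρ.trace = 1 := by
        rw [hρ_def, Matrix.trace_smul, htrv, smul_eq_mul]
        push_cast
        field_simp
      have h0 := h ρ hPSD htr
      have htrA : (Matrix.vecMulVec v (star v) * A).trace = star v ⬝ᵥ (A *ᵥ v) := by
        simp only [Matrix.trace, Matrix.diag, Matrix.mul_apply, Matrix.vecMulVec_apply,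
          dotProduct, Matrix.mulVec, Pi.star_apply, Finset.mul_sum]
        rw [Finset.sum_comm]
        exact Finset.sum_congr rfl fun i _ => Finset.sum_congr rfl fun j _ => by ring
      rw [hρ_def, Matrix.smul_mul, Matrix.trace_smul, htrA, smul_eq_mul] at h0
      have htne : ((t⁻¹ : ℝ) : ℂ) ≠ 0 := by
        simp only [ne_eq, Complex.ofReal_eq_zero, inv_eq_zero]
        exact ne_of_gt ht
      exact (mul_eq_zero.mp h0).resolve_left htne
  have hT : Matrix.toEuclideanLin A = 0 := by
    rw [← inner_map_self_eq_zero]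
    intro x
    have hqx := hq ((WithLp.equiv 2 (Fin d → ℂ)) x)
    have : (inner ℂ (Matrix.toEuclideanLin A x) x : ℂ)
        = star (star ((WithLp.equiv 2 (Fin d → ℂ)) x) ⬝ᵥ
            (A *ᵥ (WithLp.equiv 2 (Fin d → ℂ)) x)) := by
      simp only [PiLp.inner_apply, Matrix.toEuclideanLin_apply, dotProduct,
        Pi.star_apply, RCLike.inner_apply, star_sum, star_mul', star_star]
      refine Finset.sum_congr rfl fun i _ => ?_
      rfl
    rw [this, hqx, star_zero]
  exact (LinearEquiv.map_eq_zero_iff _).mp hT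

/-- given a POVM `{P i}`, another POVM `{Q j}` with processing
coefficients `c i j` (`∑ i c i j Tr[ρ P i] = Tr[ρ Q j]` for all states `ρ`, and
`∑ j c i j = 1`), setting `c̄ = min {0, min c}`, `ε* = -M c̄ / (1 - M c̄)` and
`Q j (ε*) = (1 - ε*) Q j + (ε*/M) I`, the family `{Q j (ε*)}` is a POVM and is a
post-processing of `{P i}` via the Markov matrix `m j i = (1 - ε*) c i j + ε*/M`. -/
theorem smeared_povm_is_postProcessing {d N M : ℕ} (hM : 0 < M)
    (P : Fin N → Matrix (Fin d) (Fin d) ℂ)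
    (hP : ∀ i, (P i).PosSemidef) (hPsum : ∑ i, P i = 1)
    (Q : Fin M → Matrix (Fin d) (Fin d) ℂ)
    (hQ : ∀ j, (Q j).PosSemidef) (hQsum : ∑ j, Q j = 1)
    (c : Fin N → Fin M → ℝ)
    (hc : ∀ ρ : Matrix (Fin d) (Fin d) ℂ, ρ.PosSemidef → ρ.trace = 1 →
      ∀ j, ∑ i, (c i j : ℂ) * (ρ * P i).trace = (ρ * Q j).trace)
    (hcnorm : ∀ i, ∑ j, c i j = 1)
    (cbar : ℝ)
    (hcbar : cbar ≤ 0 ∧ (∀ i j, cbar ≤ c i j) ∧ (cbar = 0 ∨ ∃ i j, cbar = c i j))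
    (ε : ℝ) (hε : ε = -((M : ℝ) * cbar) / (1 - (M : ℝ) * cbar)) :
    (∀ j, ((1 - ε : ℂ) • Q j + ((ε / M : ℝ) : ℂ) • (1 : Matrix (Fin d) (Fin d) ℂ)).PosSemidef) ∧
    (∑ j, ((1 - ε : ℂ) • Q j + ((ε / M : ℝ) : ℂ) • (1 : Matrix (Fin d) (Fin d) ℂ)) = 1) ∧
    (∀ j i, 0 ≤ (1 - ε) * c i j + ε / M) ∧
    (∀ i, ∑ j, ((1 - ε) * c i j + ε / M) = 1) ∧
    (∀ j, (1 - ε : ℂ) • Q j + ((ε / M : ℝ) : ℂ) • (1 : Matrix (Fin d) (Fin d) ℂ)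
      = ∑ i, (((1 - ε) * c i j + ε / M : ℝ) : ℂ) • P i) := by
  obtain ⟨hcb0, hcble, -⟩ := hcbar
  have hMR : (0 : ℝ) < (M : ℝ) := by exact_mod_cast hM
  set K : ℝ := 1 - (M : ℝ) * cbar with hK_def
  have hK1 : 1 ≤ K := by
    have : (M : ℝ) * cbar ≤ 0 := mul_nonpos_of_nonneg_of_nonpos (le_of_lt hMR) hcb0
    linarith
  have hK0 : (0 : ℝ) < K := lt_of_lt_of_le one_pos hK1
  have hεK : ε = (K - 1) / K := by rw [hε]; congr 1; ring
  have h1ε : 1 - ε = 1 / K := by rw [hεK]; field_simp; ring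
  have hεM : ε / (M : ℝ) = -cbar / K := by
    rw [hεK, hK_def]
    field_simp
    ring
  have hε0 : 0 ≤ ε := by
    rw [hεK]; exact div_nonneg (by linarith) (le_of_lt hK0)
  have hε1 : ε ≤ 1 := by
    have : 0 ≤ 1 - ε := by rw [h1ε]; positivity
    linarith
  -- the matrix identity Q j = ∑ i (c i j) • P i
  have hQ' : ∀ j, Q j = ∑ i, (c i j : ℂ) • P i := by
    intro j
    have hz : ((∑ i, (c i j : ℂ) • P i) - Q j) = 0 := by
      apply trace_form_zero
      intro ρ hρ htr
      have := hc ρ hρ htr j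
      rw [Matrix.mul_sub, Matrix.trace_sub, Matrix.mul_sum, Matrix.trace_sum]
      rw [← this]
      rw [sub_eq_zero]
      exact Finset.sum_congr rfl fun i _ => by rw [Matrix.mul_smul, Matrix.trace_smul, smul_eq_mul]
    rw [← sub_eq_zero, ← neg_sub, neg_eq_zero, hz]
  have hMne : (M : ℝ) ≠ 0 := ne_of_gt hMR
  refine ⟨?_, ?_, ?_, ?_, ?_⟩
  · intro j
    have h1 : ((1 - ε : ℂ)) • Q j = (((1 - ε : ℝ) : ℂ)) • Q j := by push_cast; ring_nf
    rw [h1]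
    exact (psd_smul_real (hQ j) (by linarith)).add
      (psd_smul_real Matrix.PosSemidef.one (by positivity))
  · rw [Finset.sum_add_distrib, ← Finset.smul_sum, hQsum, Finset.sum_const, Finset.card_univ,
      Fintype.card_fin, ← Nat.cast_smul_eq_nsmul ℂ, smul_smul, ← add_smul]
    have : (1 - (ε : ℂ)) + (M : ℂ) * ((ε / M : ℝ) : ℂ) = 1 := by
      push_cast
      field_simp
      ring
    rw [this, one_smul]
  · intro j i
    rw [h1ε, hεM]
    have : 1 / K * c i j + -cbar / K = (c i j - cbar) / K := by field_simp; ring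
    rw [this]
    exact div_nonneg (by linarith [hcble i j]) (le_of_lt hK0)
  · intro i
    rw [Finset.sum_add_distrib, ← Finset.mul_sum, hcnorm i, Finset.sum_const, Finset.card_univ,
      Fintype.card_fin, nsmul_eq_mul]
    field_simp
    ring
  · intro j
    rw [hQ' j, ← hPsum, Finset.smul_sum, Finset.smul_sum, ← Finset.sum_add_distrib]
    refine Finset.sum_congr rfl fun i _ => ?_
    rw [smul_smul, ← add_smul]
    congr 1
    push_cast
    ring
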